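/- arXiv:2005.14111 — 6 statements merged into one kernel-verified Lean document; each statement's English description precedes it below -/
import Mathlib

section
/- If in a book embedding of a graph G there is a path p between two nodes a and b all of whose edges are assigned the same page (color) i, then no edge of color i whose endpoints are both not on p can exit the interval (a,b); that is, no such edge has exactly one endpoint strictly between a and b in the linear order. -/
open SimpleGraph

/-- Two edges (a,b) and (c,d) conflict in the linear order given by `π`. -/
def Conflict {V : Type*} (π : V → ℝ) (a b c d : V) : Prop :=
  (π a < π c ∧ π c < π b ∧ π b < π d) ∨ (π c < π a ∧ π a < π d ∧ π d < π b)

/-- A valid `k`-page assignment: conflicting edges of `G` get different colors. -/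
def ValidColoring {V : Type*} (G : SimpleGraph V) (π : V → ℝ) (k : ℕ)
    (col : Sym2 V → Fin k) : Prop :=
  ∀ a b c d, G.Adj a b → G.Adj c d → Conflict π a b c d → col s(a, b) ≠ col s(c, d)

/-- `x` lies strictly between `a` and `b` in the linear order `π`. -/
def StrictBtw {V : Type*} (π : V → ℝ) (a b x : V) : Prop :=
  min (π a) (π b) < π x ∧ π x < max (π a) (π b)

/-- `x` lies outside the closed interval `[a,b]`. -/
def OutsideCl {V : Type*} (π : V → ℝ) (a b x : V) : Prop :=
  π x < min (π a) (π b) ∨ max (π a) (π b) < π x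

/-- The edge `(x,y)` exits the interval `(a,b)`. -/
def Exits {V : Type*} (π : V → ℝ) (a b x y : V) : Prop :=
  (StrictBtw π a b x ∧ OutsideCl π a b y) ∨ (StrictBtw π a b y ∧ OutsideCl π a b x)

lemma cross_lemma {V : Type*} {G : SimpleGraph V} {a b : V} (p : G.Walk a b)
    (P : V → Prop) (ha : P a) (hb : ¬ P b) :
    ∃ u v, G.Adj u v ∧ s(u, v) ∈ p.edges ∧ P u ∧ ¬ P v := by
  classical
  revert ha hb
  induction p with
  | nil => exact fun ha hb => absurd ha hb
  | @cons a w b h q ih =>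
    intro ha hb
    by_cases hw : P w
    · obtain ⟨u, v, h1, h2, h3, h4⟩ := ih hw hb
      exact ⟨u, v, h1, List.mem_cons_of_mem _ h2, h3, h4⟩
    · exact ⟨a, w, h, List.mem_cons_self, ha, hw⟩

/-- a monochromatic path of color `i` between `a` and `b` blocks
color-`i` edges off the path from exiting the interval `(a,b)`. -/
theorem stmt0 {V : Type*} (G : SimpleGraph V) (π : V → ℝ)
    (hπ : Function.Injective π) (k : ℕ) (col : Sym2 V → Fin k)
    (hvalid : ValidColoring G π k col)
    (a b : V) (p : G.Walk a b) (i : Fin k)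
    (hmono : ∀ e ∈ p.edges, col e = i)
    (x y : V) (hxy : G.Adj x y) (hcol : col s(x, y) = i)
    (hx : x ∉ p.support) (hy : y ∉ p.support) :
    ¬ Exits π a b x y := by
  intro hex
  classical
  have hone : (((min (π x) (π y) < π a ∧ π a < max (π x) (π y)) ∧
        ¬ (min (π x) (π y) < π b ∧ π b < max (π x) (π y)))) ∨
      (((min (π x) (π y) < π b ∧ π b < max (π x) (π y)) ∧
        ¬ (min (π x) (π y) < π a ∧ π a < max (π x) (π y)))) := by
    unfold Exits StrictBtw OutsideCl at hex
    rcases le_total (π a) (π b) with hab | hab <;>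
      rcases le_total (π x) (π y) with hxy2 | hxy2 <;>
      [ rw [min_eq_left hab, max_eq_right hab] at hex;
        rw [min_eq_left hab, max_eq_right hab] at hex;
        rw [min_eq_right hab, max_eq_left hab] at hex;
        rw [min_eq_right hab, max_eq_left hab] at hex ] <;>
      [ rw [min_eq_left hxy2, max_eq_right hxy2];
        rw [min_eq_right hxy2, max_eq_left hxy2];
        rw [min_eq_left hxy2, max_eq_right hxy2];
        rw [min_eq_right hxy2, max_eq_left hxy2] ] <;>
      rcases hex with ⟨⟨h1, h2⟩, h3 | h3⟩ | ⟨⟨h1, h2⟩, h3 | h3⟩ <;>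
      first
        | (exfalso; linarith)
        | (left; exact ⟨⟨by linarith, by linarith⟩, fun h => by linarith [h.1, h.2]⟩)
        | (right; exact ⟨⟨by linarith, by linarith⟩, fun h => by linarith [h.1, h.2]⟩)
  obtain ⟨u, v, huv, hmem, hu, hv⟩ :
      ∃ u v, G.Adj u v ∧ s(u, v) ∈ p.edges ∧
        (min (π x) (π y) < π u ∧ π u < max (π x) (π y)) ∧
        ¬ (min (π x) (π y) < π v ∧ π v < max (π x) (π y)) := by
    rcases hone with ⟨ha', hb'⟩ | ⟨hb', ha'⟩
    · exact cross_lemma p (fun v => min (π x) (π y) < π v ∧ π v < max (π x) (π y)) ha' hb'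
    · obtain ⟨u, v, h1, h2, h3, h4⟩ := cross_lemma p.reverse (fun v => min (π x) (π y) < π v ∧ π v < max (π x) (π y)) hb' ha'
      refine ⟨u, v, h1, ?_, h3, h4⟩
      rwa [SimpleGraph.Walk.edges_reverse, List.mem_reverse] at h2
  have husup : u ∈ p.support := SimpleGraph.Walk.fst_mem_support_of_mem_edges p hmem
  have hvsup : v ∈ p.support := SimpleGraph.Walk.snd_mem_support_of_mem_edges p hmem
  have hcu : col s(u, v) = i := hmono _ hmem
  have hvx : π v ≠ π x := fun h => hx (hπ h ▸ hvsup)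
  have hvy : π v ≠ π y := fun h => hy (hπ h ▸ hvsup)
  have hxyne : π x ≠ π y := fun h => hxy.ne (hπ h)
  push_neg at hv
  have hswap : s(x, y) = s(y, x) := Sym2.eq_swap
  have huvswap : s(u, v) = s(v, u) := Sym2.eq_swap
  rcases lt_or_gt_of_ne hxyne with hxy2 | hxy2
  · rw [min_eq_left hxy2.le, max_eq_right hxy2.le] at hu hv
    rcases lt_or_ge (min (π x) (π y)) (π v) with h | h
    · rw [min_eq_left hxy2.le] at h
      have h2 := hv h
      have h3 : π y < π v := lt_of_le_of_ne h2 (Ne.symm hvy)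
      exact hvalid x y u v hxy huv (Or.inl ⟨hu.1, hu.2, h3⟩) (by rw [hcol, hcu])
    · rw [min_eq_left hxy2.le] at h
      have h3 : π v < π x := lt_of_le_of_ne h hvx
      exact hvalid x y v u hxy huv.symm (Or.inr ⟨h3, hu.1, hu.2⟩)
        (by rw [hcol, show s(v,u) = s(u,v) from Sym2.eq_swap, hcu])
  · rw [min_eq_right hxy2.le, max_eq_left hxy2.le] at hu hv
    rcases lt_or_ge (π y) (π v) with h | h
    · have h2 := hv h
      have h3 : π x < π v := lt_of_le_of_ne h2 (Ne.symm hvx)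
      exact hvalid y x u v hxy.symm huv (Or.inl ⟨hu.1, hu.2, h3⟩)
        (by rw [show s(y,x) = s(x,y) from Sym2.eq_swap, hcol, hcu])
    · have h3 : π v < π y := lt_of_le_of_ne h hvy
      exact hvalid y x v u hxy.symm huv.symm (Or.inr ⟨h3, hu.1, hu.2⟩)
        (by rw [show s(y,x) = s(x,y) from Sym2.eq_swap, hcol, show s(v,u) = s(u,v) from Sym2.eq_swap, hcu])
end

section
/- If in a 3-page book embedding of a graph G there exist three paths p1, p2, p3 between two nodes a and b, where all edges of path p_i have color i for i = 1,2,3, then no edge of G both of whose endpoints lie off all three paths can exit the interval (a,b). -/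
open SimpleGraph

lemma crossLemma {V : Type*} {G : SimpleGraph V} {a b : V} (p : G.Walk a b)
    (P : V → Prop) : P a → ¬ P b → ∃ u v, G.Adj u v ∧ s(u, v) ∈ p.edges ∧ P u ∧ ¬ P v := by
  induction p with
  | nil => intro ha hb; exact absurd ha hb
  | @cons a w b h q ih =>
    intro ha hb
    by_cases hw : P w
    · obtain ⟨u, v, h1, h2, h3, h4⟩ := ih hw hb
      exact ⟨u, v, h1, List.mem_cons_of_mem _ h2, h3, h4⟩
    · exact ⟨a, w, h, List.mem_cons_self, ha, hw⟩

lemma auxLemma {V : Type*} {G : SimpleGraph V} {π : V → ℝ} (hπ : Function.Injective π)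
    {col : Sym2 V → Fin 3} (hvalid : ValidColoring G π 3 col)
    {a b : V} (p : G.Walk a b) {c : Fin 3} (hc : ∀ e ∈ p.edges, col e = c)
    {x y : V} (hxy : G.Adj x y)
    (hx : x ∉ p.support) (hy : y ∉ p.support)
    (hin : StrictBtw π a b x) (hout : OutsideCl π a b y) :
    col s(x, y) ≠ c := by
  obtain ⟨hin1, hin2⟩ := hin
  set s := min (π x) (π y) with hs
  set t := max (π x) (π y) with ht
  have hxs : π x = s ∨ π x = t := by
    rcases le_total (π x) (π y) with h | h
    · exact Or.inl (min_eq_left h).symm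
    · exact Or.inr (max_eq_left h).symm
  have hys : π y = s ∨ π y = t := by
    rcases le_total (π x) (π y) with h | h
    · exact Or.inr (max_eq_right h).symm
    · exact Or.inl (min_eq_right h).symm
  have hnotboth : ¬ ((s < π a ∧ π a < t) ∧ (s < π b ∧ π b < t)) := by
    rintro ⟨⟨h1, h2⟩, ⟨h3, h4⟩⟩
    have hm : s < min (π a) (π b) := lt_min h1 h3
    have hM : max (π a) (π b) < t := max_lt h2 h4
    rcases hxs with h | h <;> linarith
  have hone : (s < π a ∧ π a < t) ∨ (s < π b ∧ π b < t) := by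
    rcases hout with h | h <;> rcases le_total (π a) (π b) with hab | hab <;>
      rcases hys with hy' | hy' <;> rcases hxs with hx' | hx' <;>
      simp only [min_eq_left hab, max_eq_right hab, min_eq_right hab, max_eq_left hab]
        at h hin1 hin2 <;>
      first
        | (left; constructor <;> linarith [min_le_max (a := π x) (b := π y)])
        | (right; constructor <;> linarith [min_le_max (a := π x) (b := π y)])
  obtain ⟨u, v, hadj, hmem, hPu, hPv⟩ :
      ∃ u v, G.Adj u v ∧ s(u, v) ∈ p.edges ∧ (s < π u ∧ π u < t) ∧ ¬ (s < π v ∧ π v < t) := by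
    by_cases hPa : s < π a ∧ π a < t
    · exact crossLemma p _ hPa (fun hPb => hnotboth ⟨hPa, hPb⟩)
    · obtain ⟨u, v, h1, h2, h3, h4⟩ :=
        crossLemma p.reverse (fun w => s < π w ∧ π w < t) (hone.resolve_left hPa) hPa
      exact ⟨u, v, h1, by simpa using h2, h3, h4⟩
  have hvsup : v ∈ p.support := Walk.snd_mem_support_of_mem_edges p hmem
  have hvx : π v ≠ π x := fun h => hx (hπ h ▸ hvsup)
  have hvy : π v ≠ π y := fun h => hy (hπ h ▸ hvsup)
  have hvst : π v < s ∨ t < π v := by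
    rcases not_and_or.mp hPv with h | h
    · left
      refine lt_of_le_of_ne (not_lt.mp h) ?_
      rcases le_total (π x) (π y) with h' | h'
      · rw [hs, min_eq_left h']; exact hvx
      · rw [hs, min_eq_right h']; exact hvy
    · right
      refine lt_of_le_of_ne ?_ ?_
      · exact not_lt.mp h
      rcases le_total (π x) (π y) with h' | h'
      · rw [ht, max_eq_right h']; exact hvy.symm
      · rw [ht, max_eq_left h']; exact hvx.symm
  obtain ⟨hPu1, hPu2⟩ := hPu
  have hne : col s(x, y) ≠ col s(u, v) := by
    rcases (hπ.ne hxy.ne).lt_or_gt with hlt | hlt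
    · rw [hs, min_eq_left hlt.le] at hPu1 hvst
      rw [ht, max_eq_right hlt.le] at hPu2 hvst
      rcases hvst with h | h
      · have := hvalid x y v u hxy hadj.symm (Or.inr ⟨h, hPu1, hPu2⟩)
        rwa [Sym2.eq_swap (a := v)] at this
      · exact hvalid x y u v hxy hadj (Or.inl ⟨hPu1, hPu2, h⟩)
    · rw [hs, min_eq_right hlt.le] at hPu1 hvst
      rw [ht, max_eq_left hlt.le] at hPu2 hvst
      rcases hvst with h | h
      · have := hvalid y x v u hxy.symm hadj.symm (Or.inr ⟨h, hPu1, hPu2⟩)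
        rwa [Sym2.eq_swap (a := y), Sym2.eq_swap (a := v)] at this
      · have := hvalid y x u v hxy.symm hadj (Or.inl ⟨hPu1, hPu2, h⟩)
        rwa [Sym2.eq_swap (a := y)] at this
  exact fun h => hne (h.trans (hc _ hmem).symm)

/-- monochromatic paths of all three colors between `a` and `b`
block any edge off the paths from exiting the interval `(a,b)`. -/
theorem stmt1 {V : Type*} (G : SimpleGraph V) (π : V → ℝ)
    (hπ : Function.Injective π) (col : Sym2 V → Fin 3)
    (hvalid : ValidColoring G π 3 col)
    (a b : V) (p1 p2 p3 : G.Walk a b)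
    (h1 : ∀ e ∈ p1.edges, col e = 0)
    (h2 : ∀ e ∈ p2.edges, col e = 1)
    (h3 : ∀ e ∈ p3.edges, col e = 2)
    (x y : V) (hxy : G.Adj x y)
    (hx1 : x ∉ p1.support) (hx2 : x ∉ p2.support) (hx3 : x ∉ p3.support)
    (hy1 : y ∉ p1.support) (hy2 : y ∉ p2.support) (hy3 : y ∉ p3.support) :
    ¬ Exits π a b x y := by
  rintro (⟨hin, hout⟩ | ⟨hin, hout⟩)
  · have n1 := auxLemma hπ hvalid p1 h1 hxy hx1 hy1 hin hout
    have n2 := auxLemma hπ hvalid p2 h2 hxy hx2 hy2 hin hout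
    have n3 := auxLemma hπ hvalid p3 h3 hxy hx3 hy3 hin hout
    have hlt := (col s(x, y)).isLt
    have e1 : (col s(x, y)).val ≠ 0 := fun h => n1 (Fin.ext h)
    have e2 : (col s(x, y)).val ≠ 1 := fun h => n2 (Fin.ext h)
    have e3 : (col s(x, y)).val ≠ 2 := fun h => n3 (Fin.ext h)
    omega
  · have n1 := auxLemma hπ hvalid p1 h1 hxy.symm hy1 hx1 hin hout
    have n2 := auxLemma hπ hvalid p2 h2 hxy.symm hy2 hx2 hin hout
    have n3 := auxLemma hπ hvalid p3 h3 hxy.symm hy3 hx3 hin hout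
    have hlt := (col s(y, x)).isLt
    have e1 : (col s(y, x)).val ≠ 0 := fun h => n1 (Fin.ext h)
    have e2 : (col s(y, x)).val ≠ 1 := fun h => n2 (Fin.ext h)
    have e3 : (col s(y, x)).val ≠ 2 := fun h => n3 (Fin.ext h)
    omega
end

section
/- If in a 3-page book embedding of a graph G there exist monochromatic paths p1, p2, p3 of colors 1, 2, 3 respectively between two nodes a and b, then for every connected component C of the graph obtained from G by deleting all nodes of p1 ∪ p2 ∪ p3, either every node of C lies strictly between a and b in the linear order, or no node of C does. -/
open SimpleGraph

/-- Auxiliary: a walk going from strictly inside `(lo,hi)` to outside, never touching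
levels `lo`, `hi`, must contain a crossing edge. -/
lemma crossEdge {V : Type*} {G : SimpleGraph V} (π : V → ℝ) {c d : V} (w : G.Walk c d)
    (lo hi : ℝ) (hc1 : lo < π c) (hc2 : π c < hi) (hd : π d < lo ∨ hi < π d)
    (hsup : ∀ v ∈ w.support, π v ≠ lo ∧ π v ≠ hi) :
    ∃ u v, s(u, v) ∈ w.edges ∧ lo < π u ∧ π u < hi ∧ (π v < lo ∨ hi < π v) := by
  induction w with
  | nil => rcases hd with hd | hd <;> linarith
  | @cons c e d h p ih =>
    by_cases he : lo < π e ∧ π e < hi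
    · obtain ⟨u, v, hm, h1, h2, h3⟩ := ih he.1 he.2 hd
        (fun v hv => hsup v (by simp [SimpleGraph.Walk.support_cons, hv]))
      exact ⟨u, v, by simp [SimpleGraph.Walk.edges_cons, hm], h1, h2, h3⟩
    · have hne := hsup e (by simp [SimpleGraph.Walk.support_cons])
      refine ⟨c, e, by simp [SimpleGraph.Walk.edges_cons], hc1, hc2, ?_⟩
      rcases lt_trichotomy (π e) lo with h' | h' | h'
      · exact Or.inl h'
      · exact absurd h' hne.1
      · rcases lt_trichotomy (π e) hi with h'' | h'' | h''
        · exact absurd ⟨h', h''⟩ he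
        · exact absurd h'' hne.2
        · exact Or.inr h''

/-- Auxiliary: a crossing edge conflicts, so it gets a different color. -/
lemma conflictNe {V : Type*} {G : SimpleGraph V} {π : V → ℝ} {k : ℕ} {col : Sym2 V → Fin k}
    (hvalid : ValidColoring G π k col) {x y u v : V}
    (hxy : G.Adj x y) (huv : G.Adj u v)
    (h1 : π y < π u) (h2 : π u < π x) (h3 : π v < π y ∨ π x < π v) :
    col s(x, y) ≠ col s(u, v) := by
  rcases h3 with h3 | h3
  · have := hvalid y x v u hxy.symm huv.symm (Or.inr ⟨h3, h1, h2⟩)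
    rwa [show (s(y, x) : Sym2 V) = s(x, y) from Sym2.eq_swap,
      show (s(v, u) : Sym2 V) = s(u, v) from Sym2.eq_swap] at this
  · have := hvalid y x u v hxy.symm huv (Or.inl ⟨h1, h2, h3⟩)
    rwa [show (s(y, x) : Sym2 V) = s(x, y) from Sym2.eq_swap] at this

/-- Auxiliary: an edge exiting the interval `(a,b)` conflicts with some edge of any walk
from `a` to `b` avoiding its endpoints. -/
lemma exitNe {V : Type*} {G : SimpleGraph V} {π : V → ℝ} (hπ : Function.Injective π)
    {k : ℕ} {col : Sym2 V → Fin k} (hvalid : ValidColoring G π k col)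
    {a b : V} (w : G.Walk a b) {x y : V}
    (hxw : x ∉ w.support) (hyw : y ∉ w.support) (hadj : G.Adj x y)
    (hx : StrictBtw π a b x)
    (hy : π y < min (π a) (π b) ∨ max (π a) (π b) < π y) :
    ∃ e ∈ w.edges, col s(x, y) ≠ col e := by
  obtain ⟨hx1, hx2⟩ := hx
  have key : ∀ v ∈ w.support, π v ≠ π x ∧ π v ≠ π y := fun v hv =>
    ⟨fun h => hxw (hπ h ▸ hv), fun h => hyw (hπ h ▸ hv)⟩
  have keyR : ∀ v ∈ w.reverse.support, π v ≠ π x ∧ π v ≠ π y := fun v hv =>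
    key v (by rwa [SimpleGraph.Walk.support_reverse, List.mem_reverse] at hv)
  rcases le_total (π a) (π b) with hab | hab
  · rw [min_eq_left hab] at hx1 hy
    rw [max_eq_right hab] at hx2 hy
    rcases hy with hy | hy
    · obtain ⟨u, v, hm, h1, h2, h3⟩ := crossEdge π w (π y) (π x)
        (by linarith) (by linarith) (Or.inr (by linarith))
        (fun v hv => ⟨(key v hv).2, (key v hv).1⟩)
      exact ⟨s(u, v), hm, conflictNe hvalid hadj (w.adj_of_mem_edges hm) h1 h2 h3⟩
    · obtain ⟨u, v, hm, h1, h2, h3⟩ := crossEdge π w.reverse (π x) (π y)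
        (by linarith) (by linarith) (Or.inl (by linarith)) keyR
      rw [SimpleGraph.Walk.edges_reverse, List.mem_reverse] at hm
      refine ⟨s(u, v), hm, ?_⟩
      have := conflictNe hvalid hadj.symm (w.adj_of_mem_edges hm) h1 h2 h3
      rwa [show (s(y, x) : Sym2 V) = s(x, y) from Sym2.eq_swap] at this
  · rw [min_eq_right hab] at hx1 hy
    rw [max_eq_left hab] at hx2 hy
    rcases hy with hy | hy
    · obtain ⟨u, v, hm, h1, h2, h3⟩ := crossEdge π w.reverse (π y) (π x)
        (by linarith) (by linarith) (Or.inr (by linarith))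
        (fun v hv => ⟨(keyR v hv).2, (keyR v hv).1⟩)
      rw [SimpleGraph.Walk.edges_reverse, List.mem_reverse] at hm
      exact ⟨s(u, v), hm, conflictNe hvalid hadj (w.adj_of_mem_edges hm) h1 h2 h3⟩
    · obtain ⟨u, v, hm, h1, h2, h3⟩ := crossEdge π w (π x) (π y)
        (by linarith) (by linarith) (Or.inl (by linarith)) key
      refine ⟨s(u, v), hm, ?_⟩
      have := conflictNe hvalid hadj.symm (w.adj_of_mem_edges hm) h1 h2 h3
      rwa [show (s(y, x) : Sym2 V) = s(x, y) from Sym2.eq_swap] at this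

/-- given monochromatic paths of all three colors between `a` and `b`,
each connected component of `G` minus the path nodes lies entirely strictly inside
the interval `(a,b)` or entirely not strictly inside. -/
theorem stmt2 {V : Type*} (G : SimpleGraph V) (π : V → ℝ)
    (hπ : Function.Injective π) (col : Sym2 V → Fin 3)
    (hvalid : ValidColoring G π 3 col)
    (a b : V) (p1 p2 p3 : G.Walk a b)
    (h1 : ∀ e ∈ p1.edges, col e = 0)
    (h2 : ∀ e ∈ p2.edges, col e = 1)
    (h3 : ∀ e ∈ p3.edges, col e = 2)
    (S : Set V)
    (hS : S = {v | v ∉ p1.support ∧ v ∉ p2.support ∧ v ∉ p3.support}) :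
    ∀ C : (G.induce S).ConnectedComponent,
      (∀ x : S, (G.induce S).connectedComponentMk x = C → StrictBtw π a b (x : V)) ∨
      (∀ x : S, (G.induce S).connectedComponentMk x = C → ¬ StrictBtw π a b (x : V)) := by
  -- adjacent vertices of the induced graph are on the same side
  have same : ∀ x y : S, G.Adj x y → StrictBtw π a b (x : V) → StrictBtw π a b (y : V) := by
    intro x y hadj hx
    by_contra hny
    obtain ⟨hx1, hx2, hx3⟩ : (x : V) ∉ p1.support ∧ (x : V) ∉ p2.support ∧
        (x : V) ∉ p3.support := (Set.ext_iff.mp hS (x : V)).mp x.2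
    obtain ⟨hy1, hy2, hy3⟩ : (y : V) ∉ p1.support ∧ (y : V) ∉ p2.support ∧
        (y : V) ∉ p3.support := (Set.ext_iff.mp hS (y : V)).mp y.2
    have hyma : π (y : V) ≠ π a := fun h => hy1 (hπ h ▸ p1.start_mem_support)
    have hymb : π (y : V) ≠ π b := fun h => hy1 (hπ h ▸ p1.end_mem_support)
    have hy : π (y : V) < min (π a) (π b) ∨ max (π a) (π b) < π (y : V) := by
      rw [StrictBtw, not_and_or, not_lt, not_lt] at hny
      rcases le_total (π a) (π b) with hab | hab
      · rw [min_eq_left hab, max_eq_right hab] at hny ⊢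
        rcases hny with h | h
        · exact Or.inl (lt_of_le_of_ne h hyma)
        · exact Or.inr (lt_of_le_of_ne h hymb.symm)
      · rw [min_eq_right hab, max_eq_left hab] at hny ⊢
        rcases hny with h | h
        · exact Or.inl (lt_of_le_of_ne h hymb)
        · exact Or.inr (lt_of_le_of_ne h hyma.symm)
    obtain ⟨e1, he1, hc1⟩ := exitNe hπ hvalid p1 hx1 hy1 hadj hx hy
    obtain ⟨e2, he2, hc2⟩ := exitNe hπ hvalid p2 hx2 hy2 hadj hx hy
    obtain ⟨e3, he3, hc3⟩ := exitNe hπ hvalid p3 hx3 hy3 hadj hx hy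
    rw [h1 e1 he1] at hc1; rw [h2 e2 he2] at hc2; rw [h3 e3 he3] at hc3
    have : ∀ c : Fin 3, c ≠ 0 → c ≠ 1 → c ≠ 2 → False := by decide
    exact this _ hc1 hc2 hc3
  have iff_walk : ∀ {x y : S}, (G.induce S).Walk x y →
      (StrictBtw π a b (x : V) ↔ StrictBtw π a b (y : V)) := by
    intro x y w
    induction w with
    | nil => exact Iff.rfl
    | @cons u e d h p ih =>
      have hadj : G.Adj u e := by simpa using h
      exact ⟨fun hu => ih.mp (same u e hadj hu), fun hd => same e u hadj.symm (ih.mpr hd)⟩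
  intro C
  by_cases h : ∃ x : S, (G.induce S).connectedComponentMk x = C ∧ StrictBtw π a b (x : V)
  · obtain ⟨x0, hx0, hs0⟩ := h
    left
    intro x hx
    have hr : (G.induce S).Reachable x0 x :=
      (SimpleGraph.ConnectedComponent.eq).mp (hx0.trans hx.symm)
    exact hr.elim fun w => (iff_walk w).mp hs0
  · right
    intro x hx hsx
    exact h ⟨x, hx, hsx⟩
end

section
/- Suppose in a 3-page book embedding there are nodes 1, 2 and two nodes u, v strictly between them, joined by an edge (u,v) of color 3, and suppose at least 16 'marked' nodes lie strictly between u and v, each adjacent to both 1 and 2. Let y1 be the marked node closest to 1 among those in (u,v), and y2 the marked node closest to 2, and assume edge (1,y2) has color 1 and edge (2,y1) has color 2. Then every edge from node 1 to a marked node in (u,v) other than y1 has color 1, and every edge from node 2 to a marked node in (u,v) other than y2 has color 2. -/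
open SimpleGraph

/-- with the color-3 edge (u,v) and at least 16 marked common
neighbors of 1 and 2 strictly inside (u,v), where y1 (resp. y2) is the marked
node closest to 1 (resp. 2), edge (1,y2) colored 1 and edge (2,y1) colored 2,
every edge from 1 to a marked node other than y1 has color 1 and every edge
from 2 to a marked node other than y2 has color 2. -/
theorem stmt13 {V : Type*} [DecidableEq V] (G : SimpleGraph V) (π : V → ℝ)
    (hπ : Function.Injective π) (col : Sym2 V → Fin 3)
    (hvalid : ValidColoring G π 3 col)
    (n1 n2 u v : V)
    (hord : π n1 < π u ∧ π u < π v ∧ π v < π n2)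
    (huv : G.Adj u v) (huvc : col s(u, v) = 2)
    (M : Finset V) (hMcard : 16 ≤ M.card)
    (hM : ∀ m ∈ M, (π u < π m ∧ π m < π v) ∧ G.Adj n1 m ∧ G.Adj n2 m)
    (y1 : V) (hy1 : y1 ∈ M) (hy1min : ∀ m ∈ M, π y1 ≤ π m)
    (y2 : V) (hy2 : y2 ∈ M) (hy2max : ∀ m ∈ M, π m ≤ π y2)
    (h1y2 : col s(n1, y2) = 0) (h2y1 : col s(n2, y1) = 1) :
    ∀ m ∈ M, (m ≠ y1 → col s(n1, m) = 0) ∧ (m ≠ y2 → col s(n2, m) = 1) := by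
  obtain ⟨h1u, huv', hv2⟩ := hord
  intro m hm
  obtain ⟨⟨hum, hmv⟩, h1m, h2m⟩ := hM m hm
  obtain ⟨⟨huy1, hy1v⟩, h1y1', h2y1'⟩ := hM y1 hy1
  obtain ⟨⟨huy2, hy2v⟩, h1y2', h2y2'⟩ := hM y2 hy2
  -- col s(n1,m) ≠ 2 via conflict with (u,v)
  have hc1 : col s(n1, m) ≠ 2 := by
    have := hvalid n1 m u v h1m huv (Or.inl ⟨h1u, hum, hmv⟩)
    simpa [huvc] using this
  have hc2 : col s(m, n2) ≠ 2 := by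
    have := hvalid m n2 u v h2m.symm huv (Or.inr ⟨hum, hmv, hv2⟩)
    simpa [huvc] using this
  constructor
  · intro hne
    have hy1m : π y1 < π m :=
      lt_of_le_of_ne (hy1min m hm) (fun h => hne (hπ h.symm))
    have := hvalid n1 m y1 n2 h1m h2y1'.symm
      (Or.inl ⟨lt_trans h1u huy1, hy1m, lt_trans hmv hv2⟩)
    have h1 : col s(n1, m) ≠ 1 := by
      rw [show s(y1, n2) = s(n2, y1) from Sym2.eq_swap, h2y1] at this
      exact this
    omega
  · intro hne
    have hmy2 : π m < π y2 :=
      lt_of_le_of_ne (hy2max m hm) (fun h => hne (hπ h))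
    have := hvalid m n2 n1 y2 h2m.symm h1y2'
      (Or.inr ⟨lt_trans h1u hum, hmy2, lt_trans hy2v hv2⟩)
    rw [h1y2] at this
    have h2 : col s(n2, m) = col s(m, n2) := by rw [Sym2.eq_swap]
    rw [h2]
    omega
end

section
/- Let π be a linear order containing nodes in the order s, a, c1, c2, b where edges (s,a) and (s,b) have color 1, there are color-2 edges (t,a),(t,b) to a node t outside the interval [s,b] on the same side as s or beyond b, the edge (a,c2) has color 2, and the edge (b,c1) has color 3. Then no valid 3-page extension can place a node d adjacent to both a and to a node in the interval (c2,b) such that d lies in (c2,b) and the edge (a,d) is colored: the edge (a,d) conflicts with a color-1 edge (s,c1), the color-2 edge (c2,t), and the color-3 edge (b,c1), so no color is available for it. -/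
open SimpleGraph

/-- with the order s,a,c1,c2,b, the hub t outside [s,b], the
color-1 edges (s,a),(s,b),(s,c1), the color-2 edges (t,a),(t,b),(t,c2),(a,c2)
and the color-3 edge (b,c1), there is no node d in the interval (c2,b)
adjacent to a: no color is available for the edge (a,d). -/
theorem stmt15 {V : Type*} (G : SimpleGraph V) (π : V → ℝ)
    (hπ : Function.Injective π) (col : Sym2 V → Fin 3)
    (hvalid : ValidColoring G π 3 col)
    (s a c1 c2 b t : V)
    (hord : π s < π a ∧ π a < π c1 ∧ π c1 < π c2 ∧ π c2 < π b)
    (ht : π t < π s ∨ π b < π t)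
    (hsa : G.Adj s a) (hsac : col s(s, a) = 0)
    (hsb : G.Adj s b) (hsbc : col s(s, b) = 0)
    (hsc1 : G.Adj s c1) (hsc1c : col s(s, c1) = 0)
    (hta : G.Adj t a) (htac : col s(t, a) = 1)
    (htb : G.Adj t b) (htbc : col s(t, b) = 1)
    (htc2 : G.Adj t c2) (htc2c : col s(t, c2) = 1)
    (hac2 : G.Adj a c2) (hac2c : col s(a, c2) = 1)
    (hbc1 : G.Adj b c1) (hbc1c : col s(b, c1) = 2) :
    ¬ ∃ d, G.Adj a d ∧ π c2 < π d ∧ π d < π b := by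
  rintro ⟨d, had, hc2d, hdb⟩
  obtain ⟨h1, h2, h3, h4⟩ := hord
  -- conflict with (s,c1): col (a,d) ≠ 0
  have e0 : col s(s, c1) ≠ col s(a, d) := by
    apply hvalid s c1 a d hsc1 had
    left; exact ⟨h1, h2, h3.trans hc2d⟩
  -- conflict with (t,c2): col (a,d) ≠ 1
  have e1 : col s(t, c2) ≠ col s(a, d) := by
    rcases ht with htl | htr
    · apply hvalid t c2 a d htc2 had
      left; exact ⟨htl.trans h1, h2.trans h3, hc2d⟩
    · have := hvalid c2 t a d htc2.symm had
        (Or.inr ⟨h2.trans h3, hc2d, hdb.trans htr⟩)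
      rwa [Sym2.eq_swap (a := c2)] at this
  -- conflict with (b,c1): col (a,d) ≠ 2
  have e2 : col s(a, d) ≠ col s(c1, b) := by
    apply hvalid a d c1 b had hbc1.symm
    left; exact ⟨h2, h3.trans hc2d, hdb⟩
  rw [hsc1c] at e0
  rw [htc2c] at e1
  rw [Sym2.eq_swap (a := c1), hbc1c] at e2
  omega
end

section
/- In any 3-page book embedding of a graph G, if nodes a and b are connected by monochromatic paths of all three colors, and C1, C2 are two connected components of G minus the nodes of these three paths such that C1 contains a node strictly inside the interval (a,b) and C2 contains a node outside [a,b], then no edge of G joins a node of C1 to a node of C2 (indeed C1 and C2 are distinct components, and moreover all of C1 lies inside (a,b) and all of C2 lies outside). -/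
open SimpleGraph

/-- If a walk starts at a vertex satisfying `P` and ends at one not satisfying `P`,
then some edge of the walk crosses. -/
lemma cross_edge {V : Type*} {G : SimpleGraph V} (P : V → Prop) :
    ∀ {a b : V} (p : G.Walk a b), P a → ¬ P b →
    ∃ u v, s(u,v) ∈ p.edges ∧ G.Adj u v ∧ P u ∧ ¬ P v := by
  intro a b p
  induction p with
  | nil => intro h h'; exact absurd h h'
  | @cons a c b h q ih =>
    intro ha hb
    by_cases hc : P c
    · obtain ⟨u,v,he,hadj,hu,hv⟩ := ih hc hb
      exact ⟨u,v, List.mem_cons_of_mem _ he, hadj, hu, hv⟩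
    · exact ⟨a, c, List.mem_cons_self, h, ha, hc⟩

/-- An edge exiting the interval conflicts with some edge of any a–b walk avoiding it. -/
lemma path_forbids {V : Type*} {G : SimpleGraph V} {π : V → ℝ}
    (hπ : Function.Injective π)
    {col : Sym2 V → Fin 3} (hvalid : ValidColoring G π 3 col)
    {a b : V} (p : G.Walk a b) {x y : V}
    (hx : x ∉ p.support) (hy : y ∉ p.support)
    (hxy : G.Adj x y) (hbx : StrictBtw π a b x) (hoy : OutsideCl π a b y) :
    ∃ e ∈ p.edges, col s(x,y) ≠ col e := by
  classical
  set P : V → Prop := fun v => min (π x) (π y) < π v ∧ π v < max (π x) (π y) with hP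
  obtain ⟨hm, hM⟩ := hbx
  -- exactly one of a, b satisfies P
  have hPab : (P a ∧ ¬ P b) ∨ (¬ P a ∧ P b) := by
    rcases le_total (π a) (π b) with hab | hab
    · rw [min_eq_left hab] at hm; rw [max_eq_right hab] at hM
      rcases hoy with h | h
      · rw [min_eq_left hab] at h
        -- π y < π a < π x < π b
        have hyx : π y < π x := lt_trans h hm
        refine Or.inl ⟨⟨?_, ?_⟩, ?_⟩
        · simpa [min_eq_right hyx.le] using h
        · simpa [max_eq_left hyx.le] using hm
        · intro ⟨_, h2⟩
          rw [max_eq_left hyx.le] at h2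
          exact absurd (lt_trans hM h2) (lt_irrefl _)
      · rw [max_eq_right hab] at h
        -- π a < π x < π b < π y
        have hxy' : π x < π y := lt_trans hM h
        refine Or.inr ⟨?_, ⟨?_, ?_⟩⟩
        · intro ⟨h1, _⟩
          rw [min_eq_left hxy'.le] at h1
          exact absurd (lt_trans h1 hm) (lt_irrefl _)
        · simpa [min_eq_left hxy'.le] using hM
        · simpa [max_eq_right hxy'.le] using h
    · rw [min_eq_right hab] at hm; rw [max_eq_left hab] at hM
      rcases hoy with h | h
      · rw [min_eq_right hab] at h
        -- π y < π b < π x < π a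
        have hyx : π y < π x := lt_trans h hm
        refine Or.inr ⟨?_, ⟨?_, ?_⟩⟩
        · intro ⟨_, h2⟩
          rw [max_eq_left hyx.le] at h2
          exact absurd (lt_trans hM h2) (lt_irrefl _)
        · simpa [min_eq_right hyx.le] using h
        · simpa [max_eq_left hyx.le] using hm
      · rw [max_eq_left hab] at h
        -- π b < π x < π a < π y
        have hxy' : π x < π y := lt_trans hM h
        refine Or.inl ⟨⟨?_, ?_⟩, ?_⟩
        · simpa [min_eq_left hxy'.le] using hM
        · simpa [max_eq_right hxy'.le] using h
        · intro ⟨h1, _⟩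
          rw [min_eq_left hxy'.le] at h1
          exact absurd (lt_trans h1 hm) (lt_irrefl _)
  -- get a crossing edge of the walk
  have hcross : ∃ u v, s(u,v) ∈ p.edges ∧ G.Adj u v ∧ P u ∧ ¬ P v := by
    rcases hPab with ⟨ha, hb⟩ | ⟨ha, hb⟩
    · exact cross_edge P p ha hb
    · obtain ⟨u, v, he, hadj, hu, hv⟩ := cross_edge (fun v => ¬ P v) p ha (not_not_intro hb)
      exact ⟨v, u, by rwa [Sym2.eq_swap] at he, hadj.symm, not_not.mp hv, hu⟩
  obtain ⟨u, v, he, hadj, hu, hv⟩ := hcross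
  refine ⟨s(u,v), he, ?_⟩
  have hus : u ∈ p.support := p.fst_mem_support_of_mem_edges he
  have hvs : v ∈ p.support := p.snd_mem_support_of_mem_edges he
  have hux : π u ≠ π x := fun h => hx (hπ h ▸ hus)
  have huy : π u ≠ π y := fun h => hy (hπ h ▸ hus)
  have hvx : π v ≠ π x := fun h => hx (hπ h ▸ hvs)
  have hvy : π v ≠ π y := fun h => hy (hπ h ▸ hvs)
  have hxney : π x ≠ π y := fun h => hxy.ne (hπ h)
  simp only [hP] at hu hv
  rcases lt_or_gt_of_ne hxney with hlt | hlt
  · -- π x < π y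
    rw [min_eq_left hlt.le, max_eq_right hlt.le] at hu hv
    obtain ⟨hu1, hu2⟩ := hu
    push_neg at hv
    by_cases hvside : π x < π v
    · have hyv : π y < π v := lt_of_le_of_ne (hv hvside) (Ne.symm hvy)
      -- x < u < y < v : Conflict π x y u v
      exact hvalid x y u v hxy hadj (Or.inl ⟨hu1, hu2, hyv⟩)
    · have hvx' : π v < π x := lt_of_le_of_ne (not_lt.mp hvside) hvx
      -- v < x < u < y : Conflict π v u x y
      have := hvalid v u x y hadj.symm hxy (Or.inl ⟨hvx', hu1, hu2⟩)
      rw [Sym2.eq_swap (a := v) (b := u)] at this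
      exact this.symm
  · -- π y < π x
    rw [min_eq_right hlt.le, max_eq_left hlt.le] at hu hv
    obtain ⟨hu1, hu2⟩ := hu
    push_neg at hv
    by_cases hvside : π y < π v
    · have hxv : π x < π v := lt_of_le_of_ne (hv hvside) (Ne.symm hvx)
      -- y < u < x < v : Conflict π y x u v
      have := hvalid y x u v hxy.symm hadj (Or.inl ⟨hu1, hu2, hxv⟩)
      rw [Sym2.eq_swap (a := y) (b := x)] at this
      exact this
    · have hvy' : π v < π y := lt_of_le_of_ne (not_lt.mp hvside) hvy
      -- v < y < u < x : Conflict π v u y x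
      have := hvalid v u y x hadj.symm hxy.symm (Or.inl ⟨hvy', hu1, hu2⟩)
      rw [Sym2.eq_swap (a := v) (b := u), Sym2.eq_swap (a := y) (b := x)] at this
      exact this.symm

/-- given monochromatic paths of all three colors between a and b,
if component C1 of G minus the paths has a node strictly inside (a,b) and
component C2 has a node outside [a,b], then no edge joins C1 to C2, the
components are distinct, all of C1 lies inside (a,b) and all of C2 outside. -/
theorem stmt16 {V : Type*} (G : SimpleGraph V) (π : V → ℝ)
    (hπ : Function.Injective π) (col : Sym2 V → Fin 3)
    (hvalid : ValidColoring G π 3 col)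
    (a b : V) (p1 p2 p3 : G.Walk a b)
    (h1 : ∀ e ∈ p1.edges, col e = 0)
    (h2 : ∀ e ∈ p2.edges, col e = 1)
    (h3 : ∀ e ∈ p3.edges, col e = 2)
    (S : Set V)
    (hS : S = {v | v ∉ p1.support ∧ v ∉ p2.support ∧ v ∉ p3.support})
    (C1 C2 : (G.induce S).ConnectedComponent)
    (hC1 : ∃ x : S, (G.induce S).connectedComponentMk x = C1 ∧ StrictBtw π a b (x : V))
    (hC2 : ∃ y : S, (G.induce S).connectedComponentMk y = C2 ∧ OutsideCl π a b (y : V)) :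
    (∀ (x y : S), (G.induce S).connectedComponentMk x = C1 →
        (G.induce S).connectedComponentMk y = C2 → ¬ G.Adj (x : V) (y : V)) ∧
      C1 ≠ C2 ∧
      (∀ x : S, (G.induce S).connectedComponentMk x = C1 → StrictBtw π a b (x : V)) ∧
      (∀ y : S, (G.induce S).connectedComponentMk y = C2 → OutsideCl π a b (y : V)) := by
  classical
  -- no edge between S-vertices exits the interval
  have no_exit : ∀ x y : V, x ∈ S → y ∈ S → G.Adj x y →
      StrictBtw π a b x → OutsideCl π a b y → False := by
    intro x y hxS hyS hxy hbx hoy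
    rw [hS] at hxS hyS
    obtain ⟨hx1, hx2, hx3⟩ := hxS
    obtain ⟨hy1, hy2, hy3⟩ := hyS
    obtain ⟨e1, he1, hne1⟩ := path_forbids hπ hvalid p1 hx1 hy1 hxy hbx hoy
    obtain ⟨e2, he2, hne2⟩ := path_forbids hπ hvalid p2 hx2 hy2 hxy hbx hoy
    obtain ⟨e3, he3, hne3⟩ := path_forbids hπ hvalid p3 hx3 hy3 hxy hbx hoy
    rw [h1 e1 he1] at hne1
    rw [h2 e2 he2] at hne2
    rw [h3 e3 he3] at hne3
    have := (col s(x,y)).isLt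
    rw [Fin.ne_iff_vne] at hne1 hne2 hne3
    simp only [Fin.val_zero, Fin.val_one, Fin.val_two] at hne1 hne2 hne3
    omega
  -- each vertex of S is either strictly inside or outside
  have tricho : ∀ v : V, v ∈ S → StrictBtw π a b v ∨ OutsideCl π a b v := by
    intro v hv
    rw [hS] at hv
    have hva : v ≠ a := fun h => hv.1 (h ▸ p1.start_mem_support)
    have hvb : v ≠ b := fun h => hv.1 (h ▸ p1.end_mem_support)
    have h1' : π v ≠ min (π a) (π b) := by
      rcases min_choice (π a) (π b) with h | h <;> rw [h]
      · exact fun h' => hva (hπ h')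
      · exact fun h' => hvb (hπ h')
    have h2' : π v ≠ max (π a) (π b) := by
      rcases max_choice (π a) (π b) with h | h <;> rw [h]
      · exact fun h' => hva (hπ h')
      · exact fun h' => hvb (hπ h')
    rcases lt_or_gt_of_ne h1' with h | h
    · exact Or.inr (Or.inl h)
    · rcases lt_or_gt_of_ne h2' with h' | h'
      · exact Or.inl ⟨h, h'⟩
      · exact Or.inr (Or.inr h')
  have not_both : ∀ v : V, StrictBtw π a b v → OutsideCl π a b v → False := by
    intro v ⟨hm, hM⟩ h
    rcases h with h | h
    · exact absurd (lt_trans hm h) (lt_irrefl _)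
    · exact absurd (lt_trans hM h) (lt_irrefl _)
  -- StrictBtw is preserved along edges within S (both directions)
  have step : ∀ x y : S, (G.induce S).Adj x y →
      (StrictBtw π a b (x : V) ↔ StrictBtw π a b (y : V)) := by
    intro x y hadj
    have hadj' : G.Adj (x : V) (y : V) := by simpa using hadj
    constructor
    · intro hx
      rcases tricho y y.2 with h | h
      · exact h
      · exact absurd (no_exit x y x.2 y.2 hadj' hx h) id
    · intro hy
      rcases tricho x x.2 with h | h
      · exact h
      · exact absurd (no_exit y x y.2 x.2 hadj'.symm hy h) id
  -- StrictBtw is constant on connected components of the induced graph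
  have reach_const : ∀ x y : S, (G.induce S).Reachable x y →
      (StrictBtw π a b (x : V) ↔ StrictBtw π a b (y : V)) := by
    intro x y hr
    obtain ⟨w⟩ := hr
    induction w with
    | nil => rfl
    | @cons u c d h q ih => exact (step u c h).trans ih
  obtain ⟨x0, hx0C, hx0⟩ := hC1
  obtain ⟨y0, hy0C, hy0⟩ := hC2
  have hC1all : ∀ x : S, (G.induce S).connectedComponentMk x = C1 → StrictBtw π a b (x : V) := by
    intro x hx
    have hr : (G.induce S).Reachable x x0 :=
      ConnectedComponent.exact (hx.trans hx0C.symm)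
    exact (reach_const x x0 hr).mpr hx0
  have hC2all : ∀ y : S, (G.induce S).connectedComponentMk y = C2 → OutsideCl π a b (y : V) := by
    intro y hy
    have hr : (G.induce S).Reachable y y0 :=
      ConnectedComponent.exact (hy.trans hy0C.symm)
    rcases tricho y y.2 with h | h
    · exact absurd (not_both y0 ((reach_const y y0 hr).mp h) hy0) id
    · exact h
  refine ⟨?_, ?_, hC1all, hC2all⟩
  · intro x y hx hy hadj
    exact no_exit x y x.2 y.2 hadj (hC1all x hx) (hC2all y hy)
  · intro h
    exact not_both x0 hx0 (hC2all x0 (hx0C.trans h))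
end
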